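/- Let G be an abelian group, S a finite subset, k ≥ 2, and H a non-zero subgroup which is a 1-fragment of S with κ₁(S) ≤ |S|−1. Let S₀ be a smaller H-component of S. If kS + H ≠ kS, then |S₀| ≤ |H|/2, every other H-component S_i (i ≥ 1) satisfies |S_i| > |H|/2, and |kS| ≥ k|S+H| − k|H| + |kS₀|. Moreover if kS is aperiodic then kS₀ is aperiodic. -/

import Mathlib

open Set Pointwise

/-- The family S_k for the Cayley graph Γ(X) = X + S in an abelian group:
finite X with |X| ≥ k and at least k elements outside X + S. -/
def SkAdd {G : Type*} [AddCommGroup G] (S : Set G) (k : ℕ) : Set (Set G) :=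
  {X | X.Finite ∧ k ≤ X.ncard ∧ ∃ Y : Set G, Y.Finite ∧ Y.ncard = k ∧ Y ⊆ (X + S)ᶜ}

/-- S is k-separable. -/
def SepAdd {G : Type*} [AddCommGroup G] (S : Set G) (k : ℕ) : Prop := (SkAdd S k).Nonempty

/-- The k-isoperimetric connectivity κ_k(S). -/
noncomputable def kappaAdd {G : Type*} [AddCommGroup G] (S : Set G) (k : ℕ) : ℕ :=
  sInf ((fun X => (X + S).ncard - X.ncard) '' SkAdd S k)

/-- X is a k-fragment of S. -/
def IsFragAdd {G : Type*} [AddCommGroup G] (S : Set G) (k : ℕ) (X : Set G) : Prop :=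
  X ∈ SkAdd S k ∧ (X + S).ncard - X.ncard = kappaAdd S k

/-- X is a k-atom of S. -/
def IsAtomAdd {G : Type*} [AddCommGroup G] (S : Set G) (k : ℕ) (X : Set G) : Prop :=
  IsFragAdd S k X ∧ ∀ Y, IsFragAdd S k Y → X.ncard ≤ Y.ncard

/-- S is k-faithful: any k-atom A satisfies |A| ≤ |G \ (A + S)|. -/
def FaithfulAdd {G : Type*} [AddCommGroup G] (S : Set G) (k : ℕ) : Prop :=
  ∀ A : Set G, IsAtomAdd S k A → ((A + S)ᶜ).Infinite ∨ A.ncard ≤ ((A + S)ᶜ).ncard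

/-- A is an arithmetic progression {a, a+d, ..., a+md}. -/
def IsAP {G : Type*} [AddCommGroup G] (A : Set G) : Prop :=
  ∃ a d : G, ∃ m : ℕ, A = (fun i : ℕ => a + i • d) '' {i | i ≤ m}

/-- S is a Vosper subset: non-2-separable or κ₂(S) ≥ |S|. -/
def IsVosper {G : Type*} [AddCommGroup G] (S : Set G) : Prop :=
  ¬ SepAdd S 2 ∨ S.ncard ≤ kappaAdd S 2

/-- H is a hyper-atom of S: a subgroup which is a 1-fragment, of maximal cardinality
among subgroups which are 1-fragments. -/
def IsHyperAtom {G : Type*} [AddCommGroup G] (S : Set G) (H : AddSubgroup G) : Prop :=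
  IsFragAdd S 1 ↑H ∧
    ∀ K : AddSubgroup G, IsFragAdd S 1 ↑K → (K : Set G).ncard ≤ (H : Set G).ncard

/-- C is an H-component of S: a non-empty set of the form S ∩ (x + H). -/
def IsComponent {G : Type*} [AddCommGroup G] (H : AddSubgroup G) (S C : Set G) : Prop :=
  C.Nonempty ∧ ∃ x : G, C = S ∩ ({x} + (H : Set G))

/-- C is a smaller H-component of S: an H-component of minimal cardinality. -/
def IsSmallerComponent {G : Type*} [AddCommGroup G] (H : AddSubgroup G) (S C : Set G) : Prop :=
  IsComponent H S C ∧ ∀ C', IsComponent H S C' → C.ncard ≤ C'.ncard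

/-- The k-fold sumset kS = S + ⋯ + S (with 0S = {0}). -/
def iterSum {G : Type*} [AddCommGroup G] (S : Set G) : ℕ → Set G
  | 0 => {0}
  | n + 1 => iterSum S n + S

/-- A is aperiodic: its period {x : x + A = A} is trivial. -/
def IsAperiodic {G : Type*} [AddCommGroup G] (A : Set G) : Prop :=
  ∀ x : G, {x} + A = A → x = 0

section aux
variable {G : Type*} [AddCommGroup G]

private lemma iterSum_succ' (S : Set G) (n : ℕ) : iterSum S (n + 1) = iterSum S n + S := rfl

private lemma iterSum_one' (S : Set G) : iterSum S 1 = S := by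
  show iterSum S 0 + S = S
  simp [iterSum, Set.singleton_add]

private lemma iterSum_add' (S : Set G) (m n : ℕ) :
    iterSum S (m + n) = iterSum S m + iterSum S n := by
  induction n with
  | zero => simp [iterSum, Set.add_singleton]
  | succ n ih => rw [← Nat.add_assoc, iterSum_succ', iterSum_succ', ih, add_assoc]

private lemma iterSum_finite' {S : Set G} (h : S.Finite) (m : ℕ) : (iterSum S m).Finite := by
  induction m with
  | zero => exact Set.finite_singleton 0
  | succ n ih => exact ih.add h

private lemma iterSum_mono' {A B : Set G} (h : A ⊆ B) (m : ℕ) : iterSum A m ⊆ iterSum B m := by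
  induction m with
  | zero => exact subset_rfl
  | succ n ih => exact Set.add_subset_add ih h

private lemma smul_mem_iterSum' {A : Set G} {x : G} (h : x ∈ A) (m : ℕ) :
    m • x ∈ iterSum A m := by
  induction m with
  | zero => simp [iterSum]
  | succ n ih => rw [succ_nsmul]; exact Set.add_mem_add ih h

private lemma image_iterSum' {G' : Type*} [AddCommGroup G'] (φ : G →+ G') (S : Set G) (m : ℕ) :
    φ '' iterSum S m = iterSum (φ '' S) m := by
  induction m with
  | zero => simp [iterSum]
  | succ n ih => rw [iterSum_succ', Set.image_add, ih, iterSum_succ']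

variable {H : AddSubgroup G}

private lemma singleton_add_subgroup' {h₀ : G} (h : h₀ ∈ H) :
    {h₀} + (H : Set G) = (H : Set G) := by
  ext z
  simp only [Set.singleton_add, Set.mem_image, SetLike.mem_coe]
  constructor
  · rintro ⟨y, hy, rfl⟩; exact H.add_mem h hy
  · intro hz; exact ⟨z - h₀, by simpa using H.sub_mem hz h, by abel⟩

private lemma mem_coset_self' (x : G) : x ∈ {x} + (H : Set G) :=
  Set.mem_add.2 ⟨x, rfl, 0, H.zero_mem, add_zero x⟩

private lemma mem_coset_iff' {a x : G} : a ∈ {x} + (H : Set G) ↔ a - x ∈ H := by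
  simp only [Set.singleton_add, Set.mem_image, SetLike.mem_coe]
  constructor
  · rintro ⟨y, hy, rfl⟩; simpa using hy
  · intro h; exact ⟨a - x, h, by abel⟩

private lemma coset_eq' {c x : G} (h : c ∈ {x} + (H : Set G)) :
    {c} + (H : Set G) = {x} + (H : Set G) := by
  rcases Set.mem_add.1 h with ⟨x', hx', h₀, hh₀, hcx⟩
  rcases Set.mem_singleton_iff.1 hx' with rfl
  rw [← hcx, ← Set.singleton_add_singleton, add_assoc, singleton_add_subgroup' hh₀]

private lemma coset_sub_mem' {c x y : G} (hc : c ∈ {x} + (H : Set G))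
    (hy : y ∈ {x} + (H : Set G)) : c - y ∈ H := by
  have h1 := mem_coset_iff'.1 hc
  have h2 := mem_coset_iff'.1 hy
  have : c - y = (c - x) - (y - x) := by abel
  rw [this]; exact H.sub_mem h1 h2

private lemma coset_ncard' (x : G) : ({x} + (H : Set G)).ncard = (H : Set G).ncard := by
  rw [Set.singleton_add, Set.ncard_image_of_injective _ (add_right_injective x)]

private lemma coset_finite' (hH : (H : Set G).Finite) (x : G) :
    ({x} + (H : Set G)).Finite := by
  rw [Set.singleton_add]; exact hH.image _

private lemma subgroup_add_self' : (H : Set G) + (H : Set G) = (H : Set G) := by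
  apply Set.Subset.antisymm
  · rintro z hz
    rcases Set.mem_add.1 hz with ⟨a, ha, b, hb, rfl⟩
    exact H.add_mem ha hb
  · intro z hz
    exact Set.mem_add.2 ⟨z, hz, 0, H.zero_mem, add_zero z⟩

private lemma fill' (hH : (H : Set G).Finite) {x y : G} {A B : Set G}
    (hA : A ⊆ {x} + (H : Set G)) (hB : B ⊆ {y} + (H : Set G))
    (hcard : (H : Set G).ncard < A.ncard + B.ncard) :
    A + B = {x + y} + (H : Set G) := by
  have hAfin : A.Finite := (coset_finite' hH x).subset hA
  have hBfin : B.Finite := (coset_finite' hH y).subset hB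
  apply Set.Subset.antisymm
  · rintro c hc
    rcases Set.mem_add.1 hc with ⟨a, ha, b, hb, rfl⟩
    rw [mem_coset_iff']
    have h1 := mem_coset_iff'.1 (hA ha)
    have h2 := mem_coset_iff'.1 (hB hb)
    have h3 : a + b - (x + y) = (a - x) + (b - y) := by abel
    rw [h3]; exact H.add_mem h1 h2
  · intro c hc
    set B' := (fun b => c - b) '' B with hB'
    have hB'sub : B' ⊆ {x} + (H : Set G) := by
      rintro _ ⟨b, hb, rfl⟩
      rw [mem_coset_iff']
      have h2 := mem_coset_iff'.1 (hB hb)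
      have h3 := mem_coset_iff'.1 hc
      have h4 : c - b - x = (c - (x + y)) - (b - y) := by abel
      rw [h4]; exact H.sub_mem h3 h2
    have hB'fin : B'.Finite := hBfin.image _
    have hB'card : B'.ncard = B.ncard :=
      Set.ncard_image_of_injective _ (fun u v huv => by
        have h5 : c - (c - u) = c - (c - v) := by rw [huv]
        simpa using h5)
    have hunion : (A ∪ B').ncard ≤ (H : Set G).ncard := by
      rw [← coset_ncard' x]
      exact Set.ncard_le_ncard (Set.union_subset hA hB'sub) (coset_finite' hH x)
    have hie := Set.ncard_union_add_ncard_inter A B' hAfin hB'fin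
    have hinter : (A ∩ B').Nonempty := by
      rw [← Set.ncard_pos (hAfin.inter_of_left _)]
      omega
    rcases hinter with ⟨a, haA, ⟨b, hb, hab⟩⟩
    exact Set.mem_add.2 ⟨a, haA, b, hb, by simp only at hab; rw [← hab]; abel⟩

private lemma set_translate_add' (c d : G) (A B : Set G) :
    ((fun x => c + x) '' A) + ((fun x => d + x) '' B) = (fun x => (c + d) + x) '' (A + B) := by
  ext z
  simp only [Set.mem_add, Set.mem_image]
  constructor
  · rintro ⟨_, ⟨a, ha, rfl⟩, _, ⟨b, hb, rfl⟩, rfl⟩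
    exact ⟨a + b, ⟨a, ha, b, hb, rfl⟩, by abel⟩
  · rintro ⟨_, ⟨a, ha, b, hb, rfl⟩, rfl⟩
    exact ⟨c + a, ⟨a, ha, rfl⟩, d + b, ⟨b, hb, rfl⟩, by abel⟩

private lemma kemp0' : ∀ n : ℕ, ∀ A B : Set G, A.Finite → B.Finite → B.ncard = n →
    (0:G) ∈ A → (0:G) ∈ B → (∀ a ∈ A, ∀ b ∈ B, a + b = 0 → a = 0 ∧ b = 0) →
    A.ncard + B.ncard ≤ (A + B).ncard + 1 := by
  intro n
  induction n using Nat.strong_induction_on with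
  | _ n ih =>
  intro A B hA hB hBn h0A h0B huniq
  by_cases hcase : ∀ e ∈ A, ∀ b ∈ B, e + b ∈ A
  · have hB0 : B = {0} := by
      apply Set.Subset.antisymm
      · intro b hb
        have hsub : (fun x => x + b) '' A ⊆ A := by
          rintro _ ⟨a, ha, rfl⟩; exact hcase a ha b hb
        have heq : (fun x => x + b) '' A = A :=
          Set.eq_of_subset_of_ncard_le hsub
            (by rw [Set.ncard_image_of_injective _ (add_left_injective b)]) hA
        have h0 : (0:G) ∈ (fun x => x + b) '' A := by rw [heq]; exact h0A
        obtain ⟨a, ha, hab⟩ := h0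
        exact Set.mem_singleton_iff.2 (huniq a ha b hb hab).2
      · exact Set.singleton_subset_iff.2 h0B
    subst hB0
    have hz : A + ({0} : Set G) = A := by simp [Set.add_singleton]
    rw [hz, Set.ncard_singleton]
  · push_neg at hcase
    obtain ⟨e, heA, b0, hb0, hnb⟩ := hcase
    set C := (fun x => e + x) '' B with hC
    set Ae := A ∪ C with hAe
    set Be := B ∩ ((fun x => -e + x) '' A) with hBe
    have hCfin : C.Finite := hB.image _
    have hAefin : Ae.Finite := hA.union hCfin
    have hBefin : Be.Finite := hB.inter_of_left _
    have hBeeq : (fun x => -e + x) '' (A ∩ C) = Be := by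
      rw [Set.image_inter (add_right_injective (-e))]
      rw [hBe, Set.inter_comm]
      congr 1
      rw [hC, ← Set.image_comp]
      convert Set.image_id B
      simp
    have hcards : Ae.ncard + Be.ncard = A.ncard + B.ncard := by
      have h1 : Be.ncard = (A ∩ C).ncard := by
        rw [← hBeeq, Set.ncard_image_of_injective _ (add_right_injective (-e))]
      have h2 : (A ∪ C).ncard + (A ∩ C).ncard = A.ncard + C.ncard :=
        Set.ncard_union_add_ncard_inter A C hA hCfin
      have h3 : C.ncard = B.ncard := Set.ncard_image_of_injective _ (add_right_injective e)
      rw [← hAe] at h2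
      omega
    have h0Ae : (0:G) ∈ Ae := Or.inl h0A
    have h0Be : (0:G) ∈ Be := ⟨h0B, ⟨e, heA, by simp⟩⟩
    have hsum : Ae + Be ⊆ A + B := by
      rintro z hz
      rcases Set.mem_add.1 hz with ⟨u, hu, v, hv, rfl⟩
      rcases hv with ⟨hvB, a', ha', hva⟩
      have hva' : -e + a' = v := hva
      rcases hu with huA | huC
      · exact Set.add_mem_add huA hvB
      · rcases huC with ⟨b, hb, rfl⟩
        show e + b + v ∈ A + B
        have h4 : e + b + v = (e + v) + b := by abel
        rw [h4]
        have hev : e + v ∈ A := by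
          have h5 : e + v = a' := by rw [← hva']; abel
          rw [h5]; exact ha'
        exact Set.add_mem_add hev hb
    have huniq' : ∀ a ∈ Ae, ∀ b ∈ Be, a + b = 0 → a = 0 ∧ b = 0 := by
      intro u hu v hv huv
      rcases hv with ⟨hvB, a', ha', hva⟩
      have hva' : -e + a' = v := hva
      rcases hu with huA | huC
      · exact huniq u huA v hvB huv
      · rcases huC with ⟨b, hb, rfl⟩
        have huv' : e + b + v = 0 := huv
        have hev : e + v ∈ A := by
          have h5 : e + v = a' := by rw [← hva']; abel
          rw [h5]; exact ha'
        have h1 : (e + v) + b = 0 := by rw [← huv']; abel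
        obtain ⟨hev0, rfl⟩ := huniq _ hev b hb h1
        obtain ⟨he0, hv0⟩ := huniq e heA v hvB hev0
        exact ⟨by show e + 0 = 0; rw [he0, add_zero], hv0⟩
    have hBelt : Be.ncard < n := by
      have hss : Be ⊂ B := by
        constructor
        · exact Set.inter_subset_left
        · intro hsub
          have hmem : b0 ∈ Be := hsub hb0
          rcases hmem.2 with ⟨a, ha, hab⟩
          have hab' : -e + a = b0 := hab
          apply hnb
          have h6 : e + b0 = a := by rw [← hab']; abel
          rw [h6]; exact ha
      have := Set.ncard_lt_ncard hss hB
      omega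
    have hih := ih Be.ncard hBelt Ae Be hAefin hBefin rfl h0Ae h0Be huniq'
    have hle : (Ae + Be).ncard ≤ (A + B).ncard :=
      Set.ncard_le_ncard hsum (hA.add hB)
    omega

private lemma kemp' {A B : Set G} (hA : A.Finite) (hB : B.Finite) {a₀ b₀ : G}
    (ha₀ : a₀ ∈ A) (hb₀ : b₀ ∈ B)
    (hu : ∀ a ∈ A, ∀ b ∈ B, a + b = a₀ + b₀ → a = a₀ ∧ b = b₀) :
    A.ncard + B.ncard ≤ (A + B).ncard + 1 := by
  set A' := (fun x => -a₀ + x) '' A with hA'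
  set B' := (fun x => -b₀ + x) '' B with hB'
  have h0A : (0:G) ∈ A' := ⟨a₀, ha₀, by simp⟩
  have h0B : (0:G) ∈ B' := ⟨b₀, hb₀, by simp⟩
  have huniq : ∀ a ∈ A', ∀ b ∈ B', a + b = 0 → a = 0 ∧ b = 0 := by
    rintro _ ⟨a, ha, rfl⟩ _ ⟨b, hb, rfl⟩ hab
    have hab2 : a + b = a₀ + b₀ := by
      have h := hab
      have h7 : -a₀ + a + (-b₀ + b) = (a + b) - (a₀ + b₀) := by abel
      rw [h7] at h
      exact sub_eq_zero.1 h
    obtain ⟨rfl, rfl⟩ := hu a ha b hb hab2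
    constructor <;> simp
  have hmain := kemp0' B'.ncard A' B' (hA.image _) (hB.image _) rfl h0A h0B huniq
  have hsum : A' + B' = (fun x => (-a₀ + -b₀) + x) '' (A + B) := set_translate_add' _ _ _ _
  rw [hsum, Set.ncard_image_of_injective _ (add_right_injective _),
    Set.ncard_image_of_injective _ (add_right_injective _),
    Set.ncard_image_of_injective _ (add_right_injective _)] at hmain
  exact hmain

private lemma kemp_iter' {T : Set G} (hT : T.Finite) {t₀ : G} (ht₀ : t₀ ∈ T) (k : ℕ)
    (hu : ∀ m, m + 1 ≤ k → ∀ u ∈ iterSum T m, ∀ t ∈ T,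
      u + t = (m + 1) • t₀ → u = m • t₀ ∧ t = t₀) :
    ∀ m, 1 ≤ m → m ≤ k → m * T.ncard + 1 ≤ (iterSum T m).ncard + m := by
  intro m
  induction m with
  | zero => intro h; omega
  | succ m ih =>
    intro _ hmk
    rcases Nat.eq_zero_or_pos m with rfl | hm1
    · rw [iterSum_one']; omega
    · have h1 := ih hm1 (by omega)
      have hker : (iterSum T m).ncard + T.ncard ≤ (iterSum T m + T).ncard + 1 := by
        apply kemp' (iterSum_finite' hT m) hT (smul_mem_iterSum' ht₀ m) ht₀
        intro a ha b hb hab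
        apply hu m hmk a ha b hb
        rw [hab, succ_nsmul]
      rw [iterSum_succ']
      have hexp : (m + 1) * T.ncard = m * T.ncard + T.ncard := by ring
      omega

end aux

theorem stmt12 {G : Type*} [AddCommGroup G] (k : ℕ) (hk : 2 ≤ k)
    (S : Set G) (hfin : S.Finite)
    (H : AddSubgroup G) (hHne : H ≠ ⊥) (hfrag : IsFragAdd S 1 ↑H)
    (hkappa : kappaAdd S 1 < S.ncard)
    (S₀ : Set G) (hS₀ : IsSmallerComponent H S S₀)
    (hne : iterSum S k + ↑H ≠ iterSum S k) :
    2 * S₀.ncard ≤ (H : Set G).ncard ∧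
    (∀ C, IsComponent H S C → C ≠ S₀ → (H : Set G).ncard < 2 * C.ncard) ∧
    k * (S + ↑H).ncard + (iterSum S₀ k).ncard ≤ (iterSum S k).ncard + k * (H : Set G).ncard ∧
    (IsAperiodic (iterSum S k) → IsAperiodic (iterSum S₀ k)) := by
  classical
  obtain ⟨k', rfl⟩ : ∃ k', k = k' + 2 := ⟨k - 2, by omega⟩
  clear hk
  set k := k' + 2 with hkdef
  -- basic facts
  have hSne : S.Nonempty := by
    rcases S.eq_empty_or_nonempty with h | h
    · exfalso; rw [h, Set.ncard_empty] at hkappa; omega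
    · exact h
  obtain ⟨⟨hHfin, hH1, Y, hYfin, hY1, hYsub⟩, hκ⟩ := hfrag
  set Hn := (H : Set G).ncard with hHn
  -- key inequality  |S+H| + 1 ≤ |S| + |H|
  have hkey : (S + (H : Set G)).ncard + 1 ≤ S.ncard + Hn := by
    obtain ⟨s, hs⟩ := hSne
    have hHS_comm : (H : Set G) + S = S + (H : Set G) := add_comm _ _
    have hSHfin : (S + (H : Set G)).Finite := hfin.add hHfin
    have hle : Hn ≤ (S + (H : Set G)).ncard := by
      have hsub : (fun h => h + s) '' (H : Set G) ⊆ S + (H : Set G) := by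
        rintro _ ⟨h, hh, rfl⟩
        exact Set.mem_add.2 ⟨s, hs, h, hh, by abel⟩
      calc Hn = ((fun h => h + s) '' (H : Set G)).ncard :=
            (Set.ncard_image_of_injective _ (add_left_injective s)).symm
        _ ≤ (S + (H : Set G)).ncard := Set.ncard_le_ncard hsub hSHfin
    rw [← hκ, hHS_comm] at hkappa
    omega
  -- the smaller component
  obtain ⟨⟨hS₀ne, x', hS₀eqx'⟩, hS₀min⟩ := hS₀
  obtain ⟨x₀, hx₀S₀⟩ := hS₀ne
  have hx₀mem := hS₀eqx' ▸ hx₀S₀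
  have hx₀S : x₀ ∈ S := hx₀mem.1
  have hS₀eq : S₀ = S ∩ ({x₀} + (H : Set G)) := by
    rw [hS₀eqx', coset_eq' hx₀mem.2]
  have hS₀sub : S₀ ⊆ {x₀} + (H : Set G) := by rw [hS₀eq]; exact Set.inter_subset_right
  have hS₀subS : S₀ ⊆ S := by rw [hS₀eq]; exact Set.inter_subset_left
  have hS₀fin : S₀.Finite := hfin.subset hS₀subS
  -- components
  have hcompIsComp : ∀ a ∈ S, IsComponent H S (S ∩ ({a} + (H : Set G))) :=
    fun a ha => ⟨⟨a, ha, mem_coset_self' a⟩, a, rfl⟩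
  have hmin : ∀ a ∈ S, S₀.ncard ≤ (S ∩ ({a} + (H : Set G))).ncard :=
    fun a ha => hS₀min _ (hcompIsComp a ha)
  have hcomp_same : ∀ a c : G, c ∈ {a} + (H : Set G) →
      S ∩ ({c} + (H : Set G)) = S ∩ ({a} + (H : Set G)) := by
    intro a c hc; rw [coset_eq' hc]
  -- quotient setup
  set φ : G →+ G ⧸ H := QuotientAddGroup.mk' H with hφdef
  have hφ : ∀ a b : G, φ a = φ b ↔ a ∈ {b} + (H : Set G) := by
    intro a b
    rw [mem_coset_iff']
    exact QuotientAddGroup.eq_iff_sub_mem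
  have hφ0 : ∀ a : G, φ a = 0 ↔ a ∈ H := fun a => QuotientAddGroup.eq_zero_iff a
  set T : Set (G ⧸ H) := φ '' S with hT
  have hTfin : T.Finite := hfin.image _
  set t0 : G ⧸ H := φ x₀ with ht0def
  have ht0T : t0 ∈ T := ⟨x₀, hx₀S, rfl⟩
  -- fiber machinery over S
  set SF : Finset G := hfin.toFinset with hSF
  set TF : Finset (G ⧸ H) := SF.image φ with hTF
  have hTFcoe : (TF : Set (G ⧸ H)) = T := by
    rw [hTF, Finset.coe_image, Set.Finite.coe_toFinset]
  have hTFcard : TF.card = T.ncard := by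
    rw [← hTFcoe, Set.ncard_coe_finset]
  have hfibS : ∀ a ∈ S,
      (SF.filter (fun c => φ c = φ a)).card = (S ∩ ({a} + (H : Set G))).ncard := by
    intro a ha
    rw [← Set.ncard_coe_finset]
    congr 1
    ext z
    simp only [Finset.coe_filter, Set.mem_setOf_eq, Set.Finite.mem_toFinset, Set.mem_inter_iff,
      hSF]
    rw [hφ]
  have hfib_le : ∀ q ∈ TF, ∀ F : Finset G, (∀ z ∈ F, φ z = q) → F.card ≤ Hn := by
    intro q hq F hF
    obtain ⟨a, haS, rfl⟩ := Finset.mem_image.1 hq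
    have haS' : a ∈ S := (Set.Finite.mem_toFinset hfin).1 haS
    have hsub : F ⊆ (coset_finite' hHfin a).toFinset := by
      intro z hz
      rw [Set.Finite.mem_toFinset]
      exact (hφ z a).1 (hF z hz)
    calc F.card ≤ (coset_finite' hHfin a).toFinset.card := Finset.card_le_card hsub
      _ = Hn := by rw [← Set.ncard_eq_toFinset_card _ (coset_finite' hHfin a), coset_ncard']
  -- |S + H| = |TF| * |H|
  have hSHfin : (S + (H : Set G)).Finite := hfin.add hHfin
  set SHF : Finset G := hSHfin.toFinset with hSHF
  have hSHimage : SHF.image φ = TF := by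
    apply Finset.coe_injective
    rw [Finset.coe_image, Set.Finite.coe_toFinset, hTFcoe]
    rw [Set.image_add]
    have hφH : φ '' (H : Set G) = {0} := by
      apply Set.Subset.antisymm
      · rintro _ ⟨h, hh, rfl⟩
        exact (hφ0 h).2 hh
      · rintro _ rfl
        exact ⟨0, H.zero_mem, (hφ0 0).2 H.zero_mem⟩
    rw [hφH, Set.add_singleton]
    simp [hT]
  have hSHcard : (S + (H : Set G)).ncard = TF.card * Hn := by
    have hsum := Finset.card_eq_sum_card_fiberwise
      (f := φ) (s := SHF) (t := TF)
      (fun x hx => by rw [← hSHimage]; exact Finset.mem_image_of_mem φ hx)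
    have hub : ∀ q ∈ TF, (SHF.filter (fun c => φ c = q)).card ≤ Hn := by
      intro q hq
      exact hfib_le q hq _ (fun z hz => (Finset.mem_filter.1 hz).2)
    have hlb : ∀ q ∈ TF, Hn ≤ (SHF.filter (fun c => φ c = q)).card := by
      intro q hq
      obtain ⟨a, haS, rfl⟩ := Finset.mem_image.1 hq
      have haS' : a ∈ S := (Set.Finite.mem_toFinset hfin).1 haS
      have hsub : (coset_finite' hHfin a).toFinset ⊆ SHF.filter (fun c => φ c = φ a) := by
        intro z hz
        rw [Set.Finite.mem_toFinset] at hz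
        rw [Finset.mem_filter]
        constructor
        · rw [hSHF, Set.Finite.mem_toFinset]
          rcases Set.mem_add.1 hz with ⟨_, rfl, h, hh, rfl⟩
          exact Set.add_mem_add haS' hh
        · exact (hφ z a).2 hz
      calc Hn = (coset_finite' hHfin a).toFinset.card := by
            rw [← Set.ncard_eq_toFinset_card _ (coset_finite' hHfin a), coset_ncard']
        _ ≤ _ := Finset.card_le_card hsub
    have heq : ∀ q ∈ TF, (SHF.filter (fun c => φ c = q)).card = Hn :=
      fun q hq => le_antisymm (hub q hq) (hlb q hq)
    calc (S + (H : Set G)).ncard = SHF.card := by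
          rw [Set.ncard_eq_toFinset_card _ hSHfin]
      _ = ∑ q ∈ TF, (SHF.filter (fun c => φ c = q)).card := hsum
      _ = ∑ _q ∈ TF, Hn := Finset.sum_congr rfl heq
      _ = TF.card * Hn := by rw [Finset.sum_const, smul_eq_mul]
  -- deficiency: for a ∈ S outside the coset of x₀
  have hdef : ∀ a ∈ S, a ∉ {x₀} + (H : Set G) →
      Hn + 1 ≤ (S ∩ ({a} + (H : Set G))).ncard + S₀.ncard := by
    intro a haS hacos
    have hta : φ a ∈ TF := by
      rw [hTF, Finset.mem_image]
      exact ⟨a, (Set.Finite.mem_toFinset hfin).2 haS, rfl⟩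
    have ht0 : t0 ∈ TF := by
      rw [hTF, Finset.mem_image]
      exact ⟨x₀, (Set.Finite.mem_toFinset hfin).2 hx₀S, rfl⟩
    have htane : φ a ≠ t0 := fun h => hacos ((hφ a x₀).1 h)
    have ht0mem : t0 ∈ TF.erase (φ a) := Finset.mem_erase.2 ⟨htane.symm, ht0⟩
    set rest : Finset (G ⧸ H) := (TF.erase (φ a)).erase t0 with hrest
    have hsum := Finset.card_eq_sum_card_fiberwise
      (f := φ) (s := SF) (t := TF)
      (fun x hx => Finset.mem_image_of_mem φ hx)
    have hsplit1 : ∑ q ∈ TF.erase (φ a), (SF.filter (fun c => φ c = q)).card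
        + (SF.filter (fun c => φ c = φ a)).card = ∑ q ∈ TF, (SF.filter (fun c => φ c = q)).card :=
      Finset.sum_erase_add _ _ hta
    have hsplit2 : ∑ q ∈ rest, (SF.filter (fun c => φ c = q)).card
        + (SF.filter (fun c => φ c = t0)).card
        = ∑ q ∈ TF.erase (φ a), (SF.filter (fun c => φ c = q)).card :=
      Finset.sum_erase_add _ _ ht0mem
    have hrest_le : ∑ q ∈ rest, (SF.filter (fun c => φ c = q)).card ≤ rest.card * Hn := by
      calc ∑ q ∈ rest, (SF.filter (fun c => φ c = q)).card
          ≤ ∑ q ∈ rest, Hn := by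
            apply Finset.sum_le_sum
            intro q hq
            exact hfib_le q (Finset.mem_of_mem_erase (Finset.mem_of_mem_erase hq)) _
              (fun z hz => (Finset.mem_filter.1 hz).2)
        _ = rest.card * Hn := by rw [Finset.sum_const, smul_eq_mul]
    have hcard1 : rest.card + 1 = (TF.erase (φ a)).card := Finset.card_erase_add_one ht0mem
    have hcard2 : (TF.erase (φ a)).card + 1 = TF.card := Finset.card_erase_add_one hta
    have hfa : (SF.filter (fun c => φ c = φ a)).card = (S ∩ ({a} + (H : Set G))).ncard :=
      hfibS a haS
    have hf0 : (SF.filter (fun c => φ c = t0)).card = S₀.ncard := by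
      rw [ht0def, hfibS x₀ hx₀S, ← hS₀eq]
    have hScard : SF.card = S.ncard := (Set.ncard_eq_toFinset_card S hfin).symm
    have hexp : (rest.card + 2) * Hn = rest.card * Hn + 2 * Hn := by ring
    have hTFc : TF.card = rest.card + 2 := by omega
    rw [hTFc] at hSHcard
    omega
  -- component filling
  have hcompfill : ∀ a b : G, a ∈ S → b ∈ S → a ∉ {x₀} + (H : Set G) →
      (S ∩ ({b} + (H : Set G))) + (S ∩ ({a} + (H : Set G))) = {b + a} + (H : Set G) := by
    intro a b haS hbS hacos
    apply fill' hHfin Set.inter_subset_right Set.inter_subset_right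
    have h1 := hdef a haS hacos
    have h2 := hmin b hbS
    omega
  have h2S : iterSum S 2 = S + S := by
    rw [show (2:ℕ) = 1 + 1 from rfl, iterSum_succ', iterSum_one']
  -- X ⊆ X + H
  have hsubadd : ∀ X : Set G, X ⊆ X + (H : Set G) := by
    intro X z hz
    exact Set.mem_add.2 ⟨z, hz, 0, H.zero_mem, add_zero z⟩
  -- CLAIM 1 : 2|S₀| ≤ |H|
  have hclaim1 : 2 * S₀.ncard ≤ Hn := by
    by_contra hgt
    push_neg at hgt
    have hfillall : ∀ a b : G, a ∈ S → b ∈ S →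
        (S ∩ ({b} + (H : Set G))) + (S ∩ ({a} + (H : Set G))) = {b + a} + (H : Set G) := by
      intro a b haS hbS
      apply fill' hHfin Set.inter_subset_right Set.inter_subset_right
      have h1 := hmin a haS
      have h2 := hmin b hbS
      omega
    apply hne
    have h2per : iterSum S 2 + (H : Set G) = iterSum S 2 := by
      apply Set.Subset.antisymm
      · rintro z hz
        rcases Set.mem_add.1 hz with ⟨c, hc, h, hh, rfl⟩
        rw [h2S] at hc ⊢
        rcases Set.mem_add.1 hc with ⟨b, hb, a, ha, rfl⟩
        have hmem : b + a + h ∈ {b + a} + (H : Set G) :=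
          Set.mem_add.2 ⟨b + a, rfl, h, hh, rfl⟩
        rw [← hfillall a b ha hb] at hmem
        exact Set.add_subset_add Set.inter_subset_left Set.inter_subset_left hmem
      · exact hsubadd _
    calc iterSum S k + (H : Set G) = (iterSum S k' + iterSum S 2) + (H : Set G) := by
          rw [← iterSum_add']
      _ = iterSum S k' + (iterSum S 2 + (H : Set G)) := by rw [add_assoc]
      _ = iterSum S k' + iterSum S 2 := by rw [h2per]
      _ = iterSum S k := by rw [← iterSum_add']
  -- CLAIM 2
  have hclaim2 : ∀ C, IsComponent H S C → C ≠ S₀ → Hn < 2 * C.ncard := by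
    intro C hC hCne
    obtain ⟨⟨c, hcC⟩, x, hCeq⟩ := hC
    have hcS : c ∈ S := (hCeq ▸ hcC).1
    have hccos : c ∈ {x} + (H : Set G) := (hCeq ▸ hcC).2
    have hCcomp : C = S ∩ ({c} + (H : Set G)) := by
      rw [hCeq, hcomp_same x c hccos]
    have hcnot : c ∉ {x₀} + (H : Set G) := by
      intro hmem
      apply hCne
      rw [hCcomp, hcomp_same x₀ c hmem, ← hS₀eq]
    have h1 := hdef c hcS hcnot
    have h2 := hmin c hcS
    rw [hCcomp]
    omega
  -- dichotomy
  have hdich : ∀ m, ∀ c ∈ iterSum S (m + 1), c ∈ iterSum S₀ (m + 1) ∨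
      ∃ v a, v ∈ iterSum S m ∧ a ∈ S ∧ a ∉ {x₀} + (H : Set G) ∧ c = v + a := by
    intro m
    induction m with
    | zero =>
      intro c hc
      rw [iterSum_one'] at hc
      by_cases hcos : c ∈ {x₀} + (H : Set G)
      · left; rw [iterSum_one']; rw [hS₀eq]; exact ⟨hc, hcos⟩
      · right; exact ⟨0, c, Set.mem_singleton 0, hc, hcos, (zero_add c).symm⟩
    | succ m ih =>
      intro c hc
      rcases Set.mem_add.1 hc with ⟨u, hu, a, ha, rfl⟩
      by_cases hacos : a ∈ {x₀} + (H : Set G)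
      · have haS₀ : a ∈ S₀ := by rw [hS₀eq]; exact ⟨ha, hacos⟩
        rcases ih u hu with huS₀ | ⟨v, b, hv, hbS, hbcos, rfl⟩
        · left; exact Set.add_mem_add huS₀ haS₀
        · right
          refine ⟨v + a, b, ?_, hbS, hbcos, by abel⟩
          rw [iterSum_succ']
          exact Set.add_mem_add hv ha
      · right; exact ⟨u, a, hu, ha, hacos, rfl⟩
  -- full coset lemma
  have hFULL : ∀ v a, v ∈ iterSum S (k' + 1) → a ∈ S → a ∉ {x₀} + (H : Set G) →
      {v + a} + (H : Set G) ⊆ iterSum S k := by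
    intro v a hv haS hacos
    rcases Set.mem_add.1 (by rw [iterSum_succ'] at hv; exact hv) with ⟨w, hw, b, hbS, rfl⟩
    have heq1 : {w + b + a} + (H : Set G) = {w} + ({b + a} + (H : Set G)) := by
      have h9 : w + b + a = w + (b + a) := by abel
      rw [h9, ← Set.singleton_add_singleton, add_assoc]
    rw [heq1, ← hcompfill a b haS hbS hacos]
    have hsub : (S ∩ ({b} + (H : Set G))) + (S ∩ ({a} + (H : Set G))) ⊆ S + S :=
      Set.add_subset_add Set.inter_subset_left Set.inter_subset_left
    calc {w} + ((S ∩ ({b} + (H : Set G))) + (S ∩ ({a} + (H : Set G))))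
        ⊆ iterSum S k' + (S + S) :=
          Set.add_subset_add (Set.singleton_subset_iff.2 hw) hsub
      _ = iterSum S k := by rw [← h2S, ← iterSum_add']
  -- iterSum S₀ m sits in the coset of m•x₀
  have hS₀coset : ∀ m, iterSum S₀ m ⊆ {m • x₀} + (H : Set G) := by
    intro m
    induction m with
    | zero =>
      intro z hz
      rcases hz with rfl
      simp only [zero_nsmul]
      exact mem_coset_self' 0
    | succ m ih =>
      rw [iterSum_succ']
      intro z hz
      rcases Set.mem_add.1 hz with ⟨u, hu, a, ha, rfl⟩
      have h1 := mem_coset_iff'.1 (ih hu)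
      have h2 := mem_coset_iff'.1 (hS₀sub ha)
      rw [mem_coset_iff']
      have h3 : u + a - (m + 1) • x₀ = (u - m • x₀) + (a - x₀) := by
        rw [succ_nsmul]; abel
      rw [h3]; exact H.add_mem h1 h2
  -- not the full coset at k•x₀ (else kS is periodic)
  have hex : ∃ e, e ∈ {k • x₀} + (H : Set G) ∧ e ∉ iterSum S k := by
    by_contra hcon
    push_neg at hcon
    apply hne
    apply Set.Subset.antisymm
    · rintro z hz
      rcases Set.mem_add.1 hz with ⟨c, hc, h, hh, rfl⟩
      rcases hdich (k' + 1) c hc with hcS₀ | ⟨v, a, hv, haS, hacos, rfl⟩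
      · apply hcon
        have hccos := hS₀coset k hcS₀
        have h1 := mem_coset_iff'.1 hccos
        rw [mem_coset_iff']
        have h2 : c + h - k • x₀ = (c - k • x₀) + h := by abel
        rw [h2]; exact H.add_mem h1 hh
      · apply hFULL v a hv haS hacos
        exact Set.mem_add.2 ⟨v + a, rfl, h, hh, rfl⟩
    · exact hsubadd _
  obtain ⟨e, hecos, heno⟩ := hex
  -- purity of the coset of k•x₀
  have hpure : ∀ c ∈ iterSum S k, c ∈ {k • x₀} + (H : Set G) → c ∈ iterSum S₀ k := by
    intro c hc hccos
    rcases hdich (k' + 1) c hc with hcS₀ | ⟨v, a, hv, haS, hacos, rfl⟩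
    · exact hcS₀
    · exfalso
      apply heno
      apply hFULL v a hv haS hacos
      rw [coset_eq' hccos]
      exact hecos
  -- uniqueness in the quotient
  have hU : ∀ m, m + 1 ≤ k → ∀ u ∈ iterSum T m, ∀ t ∈ T,
      u + t = (m + 1) • t0 → u = m • t0 ∧ t = t0 := by
    intro m hm u hu t ht heq
    rw [← image_iterSum'] at hu
    obtain ⟨u', hu', rfl⟩ := hu
    obtain ⟨a, haS, rfl⟩ := ht
    by_cases hacos : a ∈ {x₀} + (H : Set G)
    · have hta : φ a = t0 := (hφ a x₀).2 hacos
      refine ⟨?_, hta⟩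
      rw [hta, succ_nsmul] at heq
      exact add_right_cancel heq
    · exfalso
      obtain ⟨p, hp⟩ : ∃ p, m + p = k' + 1 := ⟨k' + 1 - m, by omega⟩
      have hvmem : u' + p • x₀ ∈ iterSum S (k' + 1) := by
        rw [← hp, iterSum_add']
        exact Set.add_mem_add hu' (smul_mem_iterSum' hx₀S p)
      have hfull := hFULL (u' + p • x₀) a hvmem haS hacos
      apply heno
      apply hfull
      have hφd : φ (u' + p • x₀ + a) = φ (k • x₀) := by
        rw [map_add, map_add, map_nsmul, map_nsmul]
        have : φ u' + φ a = (m + 1) • t0 := heq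
        rw [show φ u' + p • φ x₀ + φ a = (φ u' + φ a) + p • t0 by rw [ht0def]; abel,
          this, ← add_nsmul]
        congr 1
        omega
      have hd : u' + p • x₀ + a ∈ {k • x₀} + (H : Set G) := (hφ _ _).1 hφd
      rw [coset_eq' hd]
      exact hecos
  -- Kemperman chain
  have hkch : k * T.ncard + 1 ≤ (iterSum T k).ncard + k :=
    kemp_iter' hTfin ht0T k hU k (by omega) le_rfl
  -- final counting
  have hkSfin : (iterSum S k).Finite := iterSum_finite' hfin k
  set KF : Finset G := hkSfin.toFinset with hKF
  set QkF : Finset (G ⧸ H) := KF.image φ with hQkF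
  have hQkcoe : (QkF : Set (G ⧸ H)) = iterSum T k := by
    rw [hQkF, Finset.coe_image, Set.Finite.coe_toFinset, image_iterSum']
  have hQkcard : QkF.card = (iterSum T k).ncard := by rw [← hQkcoe, Set.ncard_coe_finset]
  set kt0 : G ⧸ H := φ (k • x₀) with hkt0
  have hkt0mem : kt0 ∈ QkF := by
    rw [hQkF, Finset.mem_image]
    exact ⟨k • x₀, (Set.Finite.mem_toFinset hkSfin).2 (smul_mem_iterSum' hx₀S k), rfl⟩
  have hsumK := Finset.card_eq_sum_card_fiberwise
    (f := φ) (s := KF) (t := QkF) (fun x hx => Finset.mem_image_of_mem φ hx)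
  -- fiber bounds
  have hfib0 : (iterSum S₀ k).ncard ≤ (KF.filter (fun c => φ c = kt0)).card := by
    have hkS₀fin : (iterSum S₀ k).Finite := iterSum_finite' hS₀fin k
    have hsub : hkS₀fin.toFinset ⊆ KF.filter (fun c => φ c = kt0) := by
      intro z hz
      rw [Set.Finite.mem_toFinset] at hz
      rw [Finset.mem_filter]
      constructor
      · rw [hKF, Set.Finite.mem_toFinset]
        exact iterSum_mono' hS₀subS k hz
      · rw [hkt0]
        exact (hφ z (k • x₀)).2 (hS₀coset k hz)
    calc (iterSum S₀ k).ncard = hkS₀fin.toFinset.card := Set.ncard_eq_toFinset_card _ hkS₀fin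
      _ ≤ _ := Finset.card_le_card hsub
  have hfibfull : ∀ q ∈ QkF, q ≠ kt0 → Hn ≤ (KF.filter (fun c => φ c = q)).card := by
    intro q hq hqne
    obtain ⟨c, hcK, rfl⟩ := Finset.mem_image.1 hq
    have hckS : c ∈ iterSum S k := (Set.Finite.mem_toFinset hkSfin).1 hcK
    have hcnot : c ∉ {k • x₀} + (H : Set G) := by
      intro hmem
      exact hqne ((hφ c (k • x₀)).2 hmem)
    have hwit : ∃ v a, v ∈ iterSum S (k' + 1) ∧ a ∈ S ∧ a ∉ {x₀} + (H : Set G) ∧ c = v + a := by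
      rcases hdich (k' + 1) c hckS with hcS₀ | hw
      · exact absurd (hS₀coset k hcS₀) hcnot
      · exact hw
    obtain ⟨v, a, hv, haS, hacos, rfl⟩ := hwit
    have hfull := hFULL v a hv haS hacos
    have hsub : (coset_finite' hHfin (v + a)).toFinset ⊆ KF.filter (fun c => φ c = φ (v + a)) := by
      intro z hz
      rw [Set.Finite.mem_toFinset] at hz
      rw [Finset.mem_filter]
      constructor
      · rw [hKF, Set.Finite.mem_toFinset]
        exact hfull hz
      · exact (hφ z (v + a)).2 hz
    calc Hn = (coset_finite' hHfin (v + a)).toFinset.card := by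
          rw [← Set.ncard_eq_toFinset_card _ (coset_finite' hHfin (v + a)), coset_ncard']
      _ ≤ _ := Finset.card_le_card hsub
  -- assemble the counting
  have hKcard : KF.card = (iterSum S k).ncard := (Set.ncard_eq_toFinset_card _ hkSfin).symm
  have hsplit : ∑ q ∈ QkF.erase kt0, (KF.filter (fun c => φ c = q)).card
      + (KF.filter (fun c => φ c = kt0)).card
      = ∑ q ∈ QkF, (KF.filter (fun c => φ c = q)).card :=
    Finset.sum_erase_add _ _ hkt0mem
  have herase_ge : (QkF.erase kt0).card * Hn
      ≤ ∑ q ∈ QkF.erase kt0, (KF.filter (fun c => φ c = q)).card := by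
    calc (QkF.erase kt0).card * Hn = ∑ _q ∈ QkF.erase kt0, Hn := by
          rw [Finset.sum_const, smul_eq_mul]
      _ ≤ _ := by
          apply Finset.sum_le_sum
          intro q hq
          exact hfibfull q (Finset.mem_of_mem_erase hq) (Finset.ne_of_mem_erase hq)
  have hQkcard1 : (QkF.erase kt0).card + 1 = QkF.card := Finset.card_erase_add_one hkt0mem
  have hclaim3 : k * (S + (H : Set G)).ncard + (iterSum S₀ k).ncard
      ≤ (iterSum S k).ncard + k * Hn := by
    have h1 : k * T.ncard ≤ (QkF.erase kt0).card + k := by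
      rw [← hQkcard] at hkch
      omega
    have h2 : k * (S + (H : Set G)).ncard = (k * TF.card) * Hn := by
      rw [hSHcard]; ring
    have h3 : (k * TF.card) * Hn ≤ ((QkF.erase kt0).card + k) * Hn := by
      apply Nat.mul_le_mul_right
      rw [hTFcard]
      exact h1
    have h4 : ((QkF.erase kt0).card + k) * Hn
        = (QkF.erase kt0).card * Hn + k * Hn := by ring
    have h5 : (QkF.erase kt0).card * Hn + (iterSum S₀ k).ncard ≤ (iterSum S k).ncard := by
      rw [← hKcard, hsumK, ← hsplit]
      have := herase_ge
      have := hfib0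
      omega
    omega
  refine ⟨hclaim1, hclaim2, hclaim3, ?_⟩
  -- CLAIM 4 : aperiodicity transfer
  intro hap x hx
  have hkS₀ne : (iterSum S₀ k).Nonempty := ⟨k • x₀, smul_mem_iterSum' hx₀S₀ k⟩
  obtain ⟨c, hc⟩ := hkS₀ne
  have hxc : x + c ∈ iterSum S₀ k := by
    rw [← hx]
    exact Set.mem_add.2 ⟨x, rfl, c, hc, rfl⟩
  have hxH : x ∈ H := by
    have h1 := hS₀coset k hxc
    have h2 := hS₀coset k hc
    have := coset_sub_mem' h1 h2
    simpa using this
  have hmx : {-x} + iterSum S₀ k = iterSum S₀ k := by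
    conv_lhs => rw [← hx]
    rw [← add_assoc, Set.singleton_add_singleton, neg_add_cancel]
    ext z
    simp [Set.singleton_add]
  have hstep : ∀ y : G, y ∈ H → ({y} + iterSum S₀ k = iterSum S₀ k) →
      {y} + iterSum S k ⊆ iterSum S k := by
    intro y hyH hy z hz
    rw [Set.singleton_add] at hz
    obtain ⟨c', hc', rfl⟩ := hz
    show y + c' ∈ iterSum S k
    by_cases hccos : c' ∈ {k • x₀} + (H : Set G)
    · have hcS₀ : c' ∈ iterSum S₀ k := hpure c' hc' hccos
      have hmem : y + c' ∈ {y} + iterSum S₀ k := Set.mem_add.2 ⟨y, rfl, c', hcS₀, rfl⟩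
      rw [hy] at hmem
      exact iterSum_mono' hS₀subS k hmem
    · have hwit : ∃ v a, v ∈ iterSum S (k' + 1) ∧ a ∈ S ∧ a ∉ {x₀} + (H : Set G)
          ∧ c' = v + a := by
        rcases hdich (k' + 1) c' hc' with hcS₀ | hw
        · exact absurd (hS₀coset k hcS₀) hccos
        · exact hw
      obtain ⟨v, a, hv, haS, hacos, rfl⟩ := hwit
      apply hFULL v a hv haS hacos
      exact Set.mem_add.2 ⟨v + a, rfl, y, hyH, by abel⟩
  have heqS : {x} + iterSum S k = iterSum S k := by
    apply Set.Subset.antisymm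
    · exact hstep x hxH hx
    · intro z hz
      have h1 : -x + z ∈ iterSum S k := by
        apply hstep (-x) (H.neg_mem hxH) hmx
        exact Set.mem_add.2 ⟨-x, rfl, z, hz, rfl⟩
      have h2 : z = x + (-x + z) := by abel
      rw [h2]
      exact Set.mem_add.2 ⟨x, rfl, -x + z, h1, rfl⟩
  exact hap x heqS
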